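/- Under the setting of Proposition 2 (self-similar zipper Sᵢ(z) = z_{i−1+εᵢ} + (−1)^{εᵢ} Aᵢ(z) in ℝⁿ with z₀ = 0, affine line zipper Tᵢ(s) = t_{i−1+εᵢ} + (−1)^{εᵢ} qᵢ s with qᵢ = tᵢ − t_{i−1}, linear parametrization f, and g(t) = ∫₀ᵗ f(τ)dτ, h = g(1)): define the affine maps Wᵢ : ℝ × ℝⁿ → ℝ × ℝⁿ by Wᵢ(s, y) = (t_{i−1+εᵢ} + (−1)^{εᵢ} qᵢ s, g(t_{i−1+εᵢ}) + (−1)^{εᵢ} qᵢ s · z_{i−1+εᵢ} + qᵢ Aᵢ(y)). Then the graph Γ̃ = {(t, g(t)) : t ∈ [0,1]} satisfies Γ̃ = ⋃_{i=1}^m Wᵢ(Γ̃), and the maps Wᵢ satisfy the zipper vertex conditions Wᵢ(0, g(0)) = (t_{i−1+εᵢ}, g(t_{i−1+εᵢ})) and Wᵢ(1, h) = (t_{i−εᵢ}, g(t_{i−εᵢ})) with vertices (tⱼ, g(tⱼ)) and signature ε. -/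

import Mathlib

/-- **Proposition 2 (main statement).**
Setting: self-similar zipper `Sᵢ z = z_{i-1+εᵢ} + (-1)^{εᵢ} Aᵢ z` in `ℝⁿ` with `z₀ = 0`
and `‖Aᵢ‖ < 1`, affine line zipper `Tᵢ s = t_{i-1+εᵢ} + (-1)^{εᵢ} qᵢ s` with
`0 = t₀ < ⋯ < t_m = 1`, `qᵢ = tᵢ - t_{i-1}`, linear parametrization `f`,
`g t = ∫₀ᵗ f`, `h = g 1`.  With the affine maps
`Wᵢ (s, y) = (t_{i-1+εᵢ} + (-1)^{εᵢ} qᵢ s, g t_{i-1+εᵢ} + ((-1)^{εᵢ} qᵢ s) • z_{i-1+εᵢ} + qᵢ • Aᵢ y)`,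
the graph `Γ̃ = {(t, g t) : t ∈ [0,1]}` satisfies `Γ̃ = ⋃ᵢ Wᵢ '' Γ̃`, and the `Wᵢ`
satisfy the zipper vertex conditions with vertices `(tⱼ, g tⱼ)` and signature `ε`.
(Maps are indexed by `i = 0,…,m-1`, corresponding to the paper's `i+1`.) -/
theorem stmt8 (n m : ℕ) (hm : 1 ≤ m)
    (z : ℕ → EuclideanSpace ℝ (Fin n)) (hz0 : z 0 = 0)
    (ε : ℕ → ℕ) (hε : ∀ i, ε i ≤ 1)
    (A : ℕ → EuclideanSpace ℝ (Fin n) →L[ℝ] EuclideanSpace ℝ (Fin n))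
    (hA : ∀ i < m, ‖A i‖ < 1)
    (S : ℕ → EuclideanSpace ℝ (Fin n) → EuclideanSpace ℝ (Fin n))
    (hS : ∀ i < m, ∀ x, S i x = z (i + ε i) + ((-1 : ℝ) ^ (ε i)) • A i x)
    (hSm : ∀ i < m, S i (z m) = z (i + 1 - ε i))
    (t : ℕ → ℝ) (ht0 : t 0 = 0) (htm : t m = 1)
    (htmono : ∀ i < m, t i < t (i + 1))
    (q : ℕ → ℝ) (hq : ∀ i < m, q i = t (i + 1) - t i)
    (T : ℕ → ℝ → ℝ)
    (hT : ∀ i < m, ∀ s, T i s = t (i + ε i) + (-1 : ℝ) ^ (ε i) * q i * s)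
    (f : ℝ → EuclideanSpace ℝ (Fin n)) (hf : ContinuousOn f (Set.Icc 0 1))
    (hconj : ∀ i < m, ∀ s ∈ Set.Icc (0:ℝ) 1, f (T i s) = S i (f s))
    (g : ℝ → EuclideanSpace ℝ (Fin n))
    (hg : ∀ x, g x = ∫ τ in (0:ℝ)..x, f τ)
    (h : EuclideanSpace ℝ (Fin n)) (hh : h = g 1)
    (W : ℕ → ℝ × EuclideanSpace ℝ (Fin n) → ℝ × EuclideanSpace ℝ (Fin n))
    (hWdef : ∀ i < m, ∀ (s : ℝ) (y : EuclideanSpace ℝ (Fin n)),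
      W i (s, y) = (t (i + ε i) + (-1 : ℝ) ^ (ε i) * q i * s,
        g (t (i + ε i)) + ((-1 : ℝ) ^ (ε i) * q i * s) • z (i + ε i) + q i • A i y))
    (Γ : Set (ℝ × EuclideanSpace ℝ (Fin n)))
    (hΓ : Γ = (fun x => (x, g x)) '' Set.Icc 0 1) :
    Γ = ⋃ i ∈ Finset.range m, W i '' Γ ∧
    ∀ i < m, W i (0, g 0) = (t (i + ε i), g (t (i + ε i))) ∧
      W i (1, h) = (t (i + 1 - ε i), g (t (i + 1 - ε i))) := by
  -- basic facts
  have qpos : ∀ i < m, 0 < q i := fun i hi => by rw [hq i hi]; linarith [htmono i hi]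
  have tmono : ∀ j k : ℕ, j ≤ k → k ≤ m → t j ≤ t k := by
    intro j k hjk hkm
    induction k with
    | zero =>
      have hj0 : j = 0 := Nat.le_zero.mp hjk
      rw [hj0]
    | succ k ih =>
      rcases Nat.lt_or_ge j (k + 1) with h1 | h2
      · exact le_trans (ih (by omega) (by omega)) (le_of_lt (htmono k (by omega)))
      · have : j = k + 1 := by omega
        simp [this]
  have tIcc : ∀ j ≤ m, t j ∈ Set.Icc (0:ℝ) 1 := by
    intro j hj
    constructor
    · rw [← ht0]; exact tmono 0 j (Nat.zero_le _) hj
    · rw [← htm]; exact tmono j m hj le_rfl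
  have fint : ∀ a b : ℝ, a ∈ Set.Icc (0:ℝ) 1 → b ∈ Set.Icc (0:ℝ) 1 →
      IntervalIntegrable f MeasureTheory.volume a b := fun a b ha hb =>
    (hf.mono (Set.uIcc_subset_Icc ha hb)).intervalIntegrable
  have g0 : g 0 = 0 := by rw [hg]; simp
  have εcases : ∀ i, ε i = 0 ∨ ε i = 1 := fun i => by have := hε i; omega
  have Trange : ∀ i < m, ∀ s ∈ Set.Icc (0:ℝ) 1, T i s ∈ Set.Icc (t i) (t (i+1)) := by
    intro i hi s hs
    rw [hT i hi]
    obtain ⟨hs0, hs1⟩ := hs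
    have hqi := qpos i hi
    have hqe := hq i hi
    rcases εcases i with he | he <;> rw [he]
    · simp only [Nat.add_zero, pow_zero, one_mul]
      constructor <;> nlinarith
    · simp only [pow_one, neg_one_mul]
      constructor <;> nlinarith
  have TIcc : ∀ i < m, ∀ s ∈ Set.Icc (0:ℝ) 1, T i s ∈ Set.Icc (0:ℝ) 1 := by
    intro i hi s hs
    have h1 := Trange i hi s hs
    have h2 := tIcc i (le_of_lt hi)
    have h3 := tIcc (i+1) hi
    exact ⟨le_trans h2.1 h1.1, le_trans h1.2 h3.2⟩
  have tεIcc : ∀ i < m, t (i + ε i) ∈ Set.Icc (0:ℝ) 1 := by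
    intro i hi
    exact tIcc _ (by have := hε i; omega)
  -- key lemma
  have key : ∀ i < m, ∀ s ∈ Set.Icc (0:ℝ) 1,
      g (T i s) = g (t (i + ε i)) + ((-1:ℝ) ^ (ε i) * q i * s) • z (i + ε i)
        + q i • A i (g s) := by
    intro i hi s hs
    set a : ℝ := (-1:ℝ) ^ (ε i) * q i with ha_def
    set c : ℝ := t (i + ε i) with hc_def
    have hqi := qpos i hi
    have hpow : ((-1:ℝ) ^ (ε i)) * ((-1:ℝ) ^ (ε i)) = 1 := by
      rcases εcases i with he | he <;> rw [he] <;> norm_num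
    have ha : a ≠ 0 := by
      rcases εcases i with he | he <;> rw [ha_def, he] <;> simp <;> linarith
    have hTs : T i s = c + a * s := by rw [hT i hi]
    have hcI : c ∈ Set.Icc (0:ℝ) 1 := tεIcc i hi
    have hTI : T i s ∈ Set.Icc (0:ℝ) 1 := TIcc i hi s hs
    have hsplit : (∫ τ in (0:ℝ)..(T i s), f τ)
        = (∫ τ in (0:ℝ)..c, f τ) + ∫ τ in c..(T i s), f τ :=
      (intervalIntegral.integral_add_adjacent_intervals
        (fint 0 c (by norm_num) hcI) (fint c (T i s) hcI hTI)).symm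
    have hsub : ∫ τ in c..(T i s), f τ = a • ∫ u in (0:ℝ)..s, f (c + a * u) := by
      rw [intervalIntegral.smul_integral_comp_add_mul f a c]
      rw [hTs]; ring_nf
    have hEqOn : Set.EqOn (fun u => f (c + a * u))
        (fun u => z (i + ε i) + ((-1:ℝ) ^ (ε i)) • A i (f u)) (Set.uIcc 0 s) := by
      intro u hu
      have huI : u ∈ Set.Icc (0:ℝ) 1 := by
        have : Set.uIcc (0:ℝ) s ⊆ Set.Icc 0 1 :=
          Set.uIcc_subset_Icc (by norm_num) hs
        exact this hu
      have h1 : c + a * u = T i u := by rw [hT i hi]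
      simp only [h1]
      rw [hconj i hi u huI, hS i hi]
    have hfiu : IntervalIntegrable f MeasureTheory.volume 0 s :=
      fint 0 s (by norm_num) hs
    have hAf : IntervalIntegrable (fun u => A i (f u)) MeasureTheory.volume 0 s :=
      (((A i).continuous.comp_continuousOn
        (hf.mono (Set.uIcc_subset_Icc (by norm_num) hs)))).intervalIntegrable
    have hAf2 : IntervalIntegrable (fun u => ((-1:ℝ) ^ (ε i)) • A i (f u))
        MeasureTheory.volume 0 s := hAf.smul ((-1:ℝ) ^ (ε i))
    have hmid : ∫ u in (0:ℝ)..s, f (c + a * u)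
        = s • z (i + ε i) + ((-1:ℝ) ^ (ε i)) • A i (g s) := by
      rw [intervalIntegral.integral_congr hEqOn,
        intervalIntegral.integral_add intervalIntegrable_const hAf2,
        intervalIntegral.integral_const, intervalIntegral.integral_smul,
        (A i).intervalIntegral_comp_comm hfiu, ← hg s]
      simp
    have hcoef : a * (-1:ℝ) ^ (ε i) = q i := by
      rw [ha_def,
        show (-1:ℝ) ^ ε i * q i * (-1:ℝ) ^ ε i = ((-1:ℝ) ^ ε i * (-1:ℝ) ^ ε i) * q i by ring,
        hpow, one_mul]
    rw [hg (T i s), hsplit, hsub, hmid, ← hg c, smul_add, smul_smul, smul_smul, hcoef]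
    abel
  -- graph property of W
  have Wgraph : ∀ i < m, ∀ s ∈ Set.Icc (0:ℝ) 1,
      W i (s, g s) = (T i s, g (T i s)) := by
    intro i hi s hs
    rw [hWdef i hi, key i hi s hs, hT i hi]
  constructor
  · -- union
    apply Set.Subset.antisymm
    · intro p hp
      rw [hΓ] at hp
      obtain ⟨x, hx, rfl⟩ := hp
      -- find i with t i ≤ x ≤ t (i+1)
      set P : ℕ → Prop := fun k => t k ≤ x with hP
      have hP0 : P 0 := by rw [hP]; simp [ht0]; exact hx.1
      set i : ℕ := Nat.findGreatest P (m - 1) with hi_def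
      have hile : i ≤ m - 1 := Nat.findGreatest_le _
      have him : i < m := by omega
      have hPi : P i := Nat.findGreatest_spec (Nat.zero_le _) hP0
      have hup : x ≤ t (i + 1) := by
        by_cases hcase : i + 1 ≤ m - 1
        · by_contra hcon
          exact (Nat.findGreatest_is_greatest (Nat.lt_succ_self i) hcase)
            (le_of_lt (not_le.mp hcon))
        · have : i + 1 = m := by omega
          rw [this, htm]; exact hx.2
      -- invert T i
      have hqi := qpos i him
      set s : ℝ := (x - t (i + ε i)) / ((-1:ℝ) ^ (ε i) * q i) with hs_def
      have hqe := hq i him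
      have hsI : s ∈ Set.Icc (0:ℝ) 1 := by
        rcases εcases i with he | he <;> rw [hs_def, he]
        · simp only [Nat.add_zero, pow_zero, one_mul]
          constructor
          · apply div_nonneg _ (le_of_lt hqi); linarith [hPi]
          · rw [div_le_one hqi]; linarith
        · have htix : t i ≤ x := hPi
          simp only [pow_one, neg_one_mul]
          rw [show (x - t (i + 1)) / -(q i) = (t (i + 1) - x) / q i by
            rw [div_neg, ← neg_div, neg_sub]]
          constructor
          · exact div_nonneg (by linarith) (le_of_lt hqi)
          · rw [div_le_one hqi]; linarith
      have hTx : T i s = x := by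
        rw [hT i him, hs_def]
        field_simp
        ring
      rw [Set.mem_iUnion]
      refine ⟨i, ?_⟩
      rw [Set.mem_iUnion]
      refine ⟨Finset.mem_range.mpr him, ⟨(s, g s), ?_, ?_⟩⟩
      · rw [hΓ]; exact ⟨s, hsI, rfl⟩
      · rw [Wgraph i him s hsI, hTx]
    · intro p hp
      simp only [Set.mem_iUnion] at hp
      obtain ⟨i, hi, hp⟩ := hp
      have him : i < m := Finset.mem_range.mp hi
      obtain ⟨w, hw, rfl⟩ := hp
      rw [hΓ] at hw
      obtain ⟨x, hx, rfl⟩ := hw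
      rw [Wgraph i him x hx, hΓ]
      exact ⟨T i x, TIcc i him x hx, rfl⟩
  · -- vertex conditions
    intro i hi
    constructor
    · rw [hWdef i hi, g0]
      simp
    · have h1 : T i 1 = t (i + 1 - ε i) := by
        rw [hT i hi, hq i hi]
        rcases εcases i with he | he <;> rw [he] <;> simp <;> ring
      have := Wgraph i hi 1 (by norm_num)
      rw [hh, this, h1]
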